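/- Let F be a probability measure supported on [a,b], 0 < a ≤ b < ∞, with Stieltjes transform m, let y > 0, σ > 0, and z = u + iv with v ≥ 2σ√(yb). If t = t₁ + it₂ solves t = y - 1 + y(z - tσ²)m(z - tσ²) with 0 < t₂ < v/σ², then either t₂ ≥ (v + √(v² - 4σ²yb))/(2σ²) or t₂ ≤ (v - √(v² - 4σ²yb))/(2σ²). -/

import Mathlib

open MeasureTheory

/-- Let `F` be a probability measure supported on `[a,b]`, `0 < a ≤ b`,
with Stieltjes transform `m`, `y, σ > 0`, `z = u + iv`, `v ≥ 2σ√(yb)`. If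
`t = t₁ + it₂` solves `t = y - 1 + y(z - tσ²)m(z - tσ²)` with `0 < t₂ < v/σ²`, then
either `t₂ ≥ (v + √(v² - 4σ²yb))/(2σ²)` or `t₂ ≤ (v - √(v² - 4σ²yb))/(2σ²)`. -/
theorem im_t_dichotomy
    (F : Measure ℝ) [IsProbabilityMeasure F] (a b : ℝ) (ha : 0 < a) (hab : a ≤ b)
    (hsupp : F ((Set.Icc a b)ᶜ) = 0)
    (y σ : ℝ) (hy : 0 < y) (hσ : 0 < σ)
    (m : ℂ → ℂ) (hm : ∀ w : ℂ, m w = ∫ x, ((x : ℂ) - w)⁻¹ ∂F)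
    (z t : ℂ) (hv : 2 * σ * Real.sqrt (y * b) ≤ z.im)
    (ht2pos : 0 < t.im) (ht2lt : t.im < z.im / σ ^ 2)
    (ht : t = (y : ℂ) - 1 + (y : ℂ) * (z - t * (σ : ℂ) ^ 2) * m (z - t * (σ : ℂ) ^ 2)) :
    (z.im + Real.sqrt (z.im ^ 2 - 4 * σ ^ 2 * y * b)) / (2 * σ ^ 2) ≤ t.im ∨
    t.im ≤ (z.im - Real.sqrt (z.im ^ 2 - 4 * σ ^ 2 * y * b)) / (2 * σ ^ 2) := by
  have hb : 0 < b := lt_of_lt_of_le ha hab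
  have hyb : 0 ≤ y * b := by positivity
  set v := z.im with hv_def
  set s := t.im with hs_def
  set w : ℂ := z - t * (σ : ℂ) ^ 2 with hw
  have hwim : w.im = v - s * σ ^ 2 := by
    simp [hw, Complex.sub_im, Complex.mul_im, ← Complex.ofReal_pow]
    rfl
  have hηpos : 0 < w.im := by
    rw [hwim]
    rw [lt_div_iff₀ (by positivity : (0:ℝ) < σ ^ 2)] at ht2lt
    linarith
  -- measurability / integrability of the Stieltjes integrand
  have hmeas : Measurable fun x : ℝ => ((x : ℂ) - w)⁻¹ :=
    (Complex.measurable_ofReal.sub measurable_const).inv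
  have hbound : ∀ x : ℝ, ‖((x : ℂ) - w)⁻¹‖ ≤ (w.im)⁻¹ := by
    intro x
    rw [norm_inv]
    have h1 : w.im ≤ ‖(x : ℂ) - w‖ := by
      have := Complex.abs_im_le_norm ((x : ℂ) - w)
      have h2 : ((x : ℂ) - w).im = -w.im := by simp
      rw [h2] at this
      rw [abs_neg, abs_of_pos hηpos] at this
      exact this
    gcongr
  have hint : Integrable (fun x : ℝ => ((x : ℂ) - w)⁻¹) F :=
    ⟨hmeas.aestronglyMeasurable,
      HasFiniteIntegral.of_bounded (C := (w.im)⁻¹) (ae_of_all _ hbound)⟩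
  have hint2 : Integrable (fun x : ℝ => w * ((x : ℂ) - w)⁻¹) F := hint.const_mul w
  -- imaginary part of the integrand
  have himx : ∀ x : ℝ, (w * ((x : ℂ) - w)⁻¹).im
      = w.im * x / Complex.normSq ((x : ℂ) - w) := by
    intro x
    rw [Complex.mul_im, Complex.inv_im, Complex.inv_re]
    simp [Complex.sub_re, Complex.sub_im]
    ring
  -- express t.im as an integral
  have him : s = y * ∫ x, (w * ((x : ℂ) - w)⁻¹).im ∂F := by
    have : s = ((y : ℂ) - 1 + (y : ℂ) * w * m w).im := by
      rw [hs_def]; exact congrArg Complex.im ht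
    rw [this, hm]
    rw [Complex.add_im, Complex.sub_im]
    simp only [Complex.ofReal_im, Complex.one_im, sub_zero, zero_sub, neg_zero, zero_add]
    rw [mul_assoc, ← integral_const_mul]
    rw [Complex.mul_im]
    simp only [Complex.ofReal_im, Complex.ofReal_re, zero_mul, add_zero]
    congr 1
    exact (integral_im (hint.const_mul w)).symm
  -- almost everywhere x ∈ [a, b]
  have hae : ∀ᵐ x ∂F, x ∈ Set.Icc a b := by
    exact ae_iff.mpr hsupp
  -- bound the integral
  have hib : ∫ x, (w * ((x : ℂ) - w)⁻¹).im ∂F ≤ b / w.im := by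
    have hle : ∀ᵐ (x : ℝ) ∂F, (w * ((x : ℂ) - w)⁻¹).im ≤ b / w.im := by
      filter_upwards [hae] with x hx
      rw [himx x]
      have hx0 : 0 ≤ x := le_trans ha.le hx.1
      have hNeq : Complex.normSq ((x : ℂ) - w) = ((x : ℂ) - w).re ^ 2 + w.im ^ 2 := by
        rw [Complex.normSq_apply]
        have : ((x : ℂ) - w).im = -w.im := by simp
        rw [this]; ring
      have hNpos : 0 < Complex.normSq ((x : ℂ) - w) := by
        rw [hNeq]; nlinarith [sq_nonneg (((x : ℂ) - w).re)]
      rw [div_le_div_iff₀ hNpos hηpos]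
      nlinarith [sq_nonneg (((x : ℂ) - w).re), hx.2, mul_nonneg (sq_nonneg w.im) (sub_nonneg.mpr hx.2)]
    calc ∫ x, (w * ((x : ℂ) - w)⁻¹).im ∂F
        ≤ ∫ _x, b / w.im ∂F := integral_mono_ae hint2.im (integrable_const _) hle
      _ = b / w.im := by simp
  -- key inequality : s * (v - s σ²) ≤ y b
  have key : s * (v - s * σ ^ 2) ≤ y * b := by
    have h1 : s ≤ y * (b / w.im) := by
      rw [him]
      exact mul_le_mul_of_nonneg_left hib hy.le
    rw [mul_div_assoc'] at h1
    have h2 := (le_div_iff₀ hηpos).mp h1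
    rw [hwim] at h2
    linarith
  -- discriminant nonnegative
  have hD2 : 0 ≤ v ^ 2 - 4 * σ ^ 2 * y * b := by
    have h1 : (2 * σ * Real.sqrt (y * b)) ^ 2 = 4 * σ ^ 2 * (y * b) := by
      rw [mul_pow, mul_pow, Real.sq_sqrt hyb]; ring
    have hvnn : 0 ≤ 2 * σ * Real.sqrt (y * b) := by positivity
    have h2 := pow_le_pow_left₀ hvnn hv 2
    linarith
  set D := Real.sqrt (v ^ 2 - 4 * σ ^ 2 * y * b) with hD
  have hDsq : D ^ 2 = v ^ 2 - 4 * σ ^ 2 * y * b := Real.sq_sqrt hD2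
  by_contra hcon
  push_neg at hcon
  obtain ⟨h1, h2⟩ := hcon
  rw [lt_div_iff₀ (by positivity : (0:ℝ) < 2 * σ ^ 2)] at h1
  rw [div_lt_iff₀ (by positivity : (0:ℝ) < 2 * σ ^ 2)] at h2
  nlinarith [mul_pos (sub_pos.mpr h1) (sub_pos.mpr h2), hDsq, key, sq_nonneg σ]
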